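/- (Céa's Lemma.) Let H be a complex Hilbert space and A : H → H a bounded coercive linear operator, with coercivity constant α > 0, i.e. |⟨Aφ, φ⟩| ≥ α‖φ‖² for all φ ∈ H. Then A is invertible and, for every g ∈ H and every finite-dimensional subspace H_N of H, there exists a unique φ_N ∈ H_N satisfying ⟨Aφ_N, ψ_N⟩ = ⟨g, ψ_N⟩ for all ψ_N ∈ H_N, and this Galerkin solution satisfies ‖φ − φ_N‖ ≤ (‖A‖/α) · inf{‖φ − ψ‖ : ψ ∈ H_N}, where φ := A⁻¹g. -/

import Mathlib

open scoped ComplexInnerProductSpace Pointwise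

variable {H : Type*} [NormedAddCommGroup H] [InnerProductSpace ℂ H] [CompleteSpace H]

/-- `x` is a Galerkin solution in the subspace `V` for the equation `A φ = g`:
`x ∈ V` and `⟨A x, ψ⟩ = ⟨g, ψ⟩` for all `ψ ∈ V`. -/
def IsGalerkinSolution (A : H →L[ℂ] H) (V : Submodule ℂ H) (g x : H) : Prop :=
  x ∈ V ∧ ∀ ψ ∈ V, ⟪A x, ψ⟫ = ⟪g, ψ⟫

/-- From coercivity, `⟪A φ, φ⟫ = 0` forces `φ = 0`. -/
lemma coercive_eq_zero (A : H →L[ℂ] H) (α : ℝ) (hα : 0 < α)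
    (hcoer : ∀ φ : H, α * ‖φ‖ ^ 2 ≤ ‖⟪A φ, φ⟫‖) {φ : H} (h : ⟪A φ, φ⟫ = 0) : φ = 0 := by
  have h1 := hcoer φ
  rw [h, norm_zero] at h1
  have h2 : ‖φ‖ ^ 2 ≤ 0 := by nlinarith
  have : ‖φ‖ = 0 := by nlinarith [sq_nonneg ‖φ‖, norm_nonneg φ]
  simpa using this

/-- Coercivity gives a lower bound `α ‖φ‖ ≤ ‖A φ‖`. -/
lemma coercive_norm_le (A : H →L[ℂ] H) (α : ℝ) (hα : 0 < α)
    (hcoer : ∀ φ : H, α * ‖φ‖ ^ 2 ≤ ‖⟪A φ, φ⟫‖) (φ : H) : α * ‖φ‖ ≤ ‖A φ‖ := by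
  rcases eq_or_ne φ 0 with rfl | hφ
  · simp
  · have h1 := hcoer φ
    have h2 : ‖⟪A φ, φ⟫‖ ≤ ‖A φ‖ * ‖φ‖ := norm_inner_le_norm _ _
    have hn : 0 < ‖φ‖ := norm_pos_iff.mpr hφ
    nlinarith

/-- Céa's Lemma: if `A` is coercive with coercivity constant `α > 0`, then `A` is invertible
and for every `g` and every finite-dimensional subspace `V` there is a unique Galerkin
solution `φ_N ∈ V`, which satisfies `‖φ − φ_N‖ ≤ (‖A‖/α) inf_{ψ ∈ V} ‖φ − ψ‖` where
`φ = A⁻¹ g`. -/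
theorem cea_lemma (A : H →L[ℂ] H) (α : ℝ) (hα : 0 < α)
    (hcoer : ∀ φ : H, α * ‖φ‖ ^ 2 ≤ ‖⟪A φ, φ⟫‖) :
    Function.Bijective A ∧
    ∀ (g : H) (V : Submodule ℂ H), FiniteDimensional ℂ V →
      (∃! x : H, IsGalerkinSolution A V g x) ∧
      ∀ x : H, IsGalerkinSolution A V g x → ∀ φ : H, A φ = g →
        ‖φ - x‖ ≤ (‖A‖ / α) * sInf ((fun ψ : H => ‖φ - ψ‖) '' (V : Set H)) := by
  -- A is injective
  have hinj : Function.Injective A := by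
    intro u v huv
    have : ⟪A (u - v), u - v⟫ = 0 := by
      simp [map_sub, huv]
    have := coercive_eq_zero A α hα hcoer this
    exact sub_eq_zero.mp this
  -- A has closed range
  have hanti : AntilipschitzWith (⟨α, hα.le⟩ : NNReal)⁻¹ A :=
    A.antilipschitz_of_bound (fun x => by
      have h := coercive_norm_le A α hα hcoer x
      change ‖x‖ ≤ α⁻¹ * ‖A x‖
      rw [inv_mul_eq_div, le_div_iff₀ hα]
      linarith [mul_comm α ‖x‖ ▸ h])
  have hclosed : IsClosed (Set.range A) := hanti.isClosed_range A.uniformContinuous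
  -- A is surjective
  have hsurj : Function.Surjective A := by
    have hR : IsClosed ((LinearMap.range (A : H →ₗ[ℂ] H) : Submodule ℂ H) : Set H) := by
      simpa [LinearMap.coe_range] using hclosed
    haveI : CompleteSpace (LinearMap.range (A : H →ₗ[ℂ] H)) := hR.completeSpace_coe
    have hbot : (LinearMap.range (A : H →ₗ[ℂ] H))ᗮ = ⊥ := by
      rw [Submodule.eq_bot_iff]
      intro φ hφ
      have h0 : ⟪A φ, φ⟫ = 0 := hφ (A φ) ⟨φ, rfl⟩
      exact coercive_eq_zero A α hα hcoer h0
    have htop : LinearMap.range (A : H →ₗ[ℂ] H) = ⊤ := Submodule.orthogonal_eq_bot_iff.mp hbot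
    intro y
    have : y ∈ LinearMap.range (A : H →ₗ[ℂ] H) := htop ▸ Submodule.mem_top
    exact this
  refine ⟨⟨hinj, hsurj⟩, ?_⟩
  intro g V hV
  haveI := hV
  haveI : CompleteSpace V := FiniteDimensional.complete ℂ V
  -- key: projection identity ⟪P u, v⟫ = ⟪u, v⟫ for v ∈ V
  have hproj : ∀ (u : H) (v : H), v ∈ V → ⟪(Submodule.orthogonalProjectionOnto V u : H), v⟫ = ⟪u, v⟫ := by
    intro u v hv
    have := Submodule.starProjection_inner_eq_zero u v hv
    rw [Submodule.starProjection_apply, inner_sub_left] at this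
    linear_combination -this
  constructor
  · -- existence and uniqueness of the Galerkin solution
    set T : V →ₗ[ℂ] V :=
      (Submodule.orthogonalProjectionOnto V).toLinearMap ∘ₗ A.toLinearMap ∘ₗ V.subtype with hT
    have hTinj : Function.Injective T := by
      rw [injective_iff_map_eq_zero]
      intro x hx
      have h0 : ⟪A (x : H), (x : H)⟫ = 0 := by
        rw [← hproj (A (x : H)) (x : H) x.2]
        have : ((T x : V) : H) = (Submodule.orthogonalProjectionOnto V (A (x : H)) : H) := rfl
        rw [← this, hx]
        simp
      have := coercive_eq_zero A α hα hcoer h0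
      exact Subtype.ext this
    have hTsurj : Function.Surjective T := LinearMap.injective_iff_surjective.mp hTinj
    obtain ⟨x, hx⟩ := hTsurj (Submodule.orthogonalProjectionOnto V g)
    have hxg : IsGalerkinSolution A V g (x : H) := by
      refine ⟨x.2, fun ψ hψ => ?_⟩
      have h0 : ⟪A (x : H) - g, ψ⟫ = 0 := by
        have hmem : A (x : H) - g ∈ Vᗮ := by
          rw [← Submodule.orthogonalProjectionOnto_eq_zero_iff]
          rw [map_sub]
          have : Submodule.orthogonalProjectionOnto V (A (x : H)) = T x := rfl
          rw [this, hx]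
          simp
        exact inner_eq_zero_symm.mp (hmem ψ hψ)
      rw [inner_sub_left] at h0
      exact sub_eq_zero.mp h0
    refine ⟨(x : H), hxg, ?_⟩
    intro y hy
    have hdV : y - (x : H) ∈ V := V.sub_mem hy.1 x.2
    have hd : ⟪A (y - (x : H)), y - (x : H)⟫ = 0 := by
      rw [map_sub, inner_sub_left, hy.2 _ hdV, hxg.2 _ hdV, sub_self]
    have := coercive_eq_zero A α hα hcoer hd
    exact sub_eq_zero.mp this
  · -- error estimate
    intro x hx φ hφ
    have horth : ∀ χ ∈ V, ⟪A (φ - x), χ⟫ = 0 := by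
      intro χ hχ
      rw [map_sub, inner_sub_left, hφ, hx.2 χ hχ, sub_self]
    have key : ∀ ψ ∈ V, ‖φ - x‖ ≤ (‖A‖ / α) * ‖φ - ψ‖ := by
      intro ψ hψ
      have h1 : ⟪A (φ - x), φ - x⟫ = ⟪A (φ - x), φ - ψ⟫ := by
        have h := horth (ψ - x) (V.sub_mem hψ hx.1)
        simp only [inner_sub_right] at h ⊢
        linear_combination h
      have h2 : α * ‖φ - x‖ ^ 2 ≤ ‖A‖ * ‖φ - x‖ * ‖φ - ψ‖ := by
        calc α * ‖φ - x‖ ^ 2 ≤ ‖⟪A (φ - x), φ - x⟫‖ := hcoer _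
          _ = ‖⟪A (φ - x), φ - ψ⟫‖ := by rw [h1]
          _ ≤ ‖A (φ - x)‖ * ‖φ - ψ‖ := norm_inner_le_norm _ _
          _ ≤ ‖A‖ * ‖φ - x‖ * ‖φ - ψ‖ := by
              gcongr
              exact A.le_opNorm _
      rcases eq_or_lt_of_le (norm_nonneg (φ - x)) with h0 | h0
      · rw [← h0]
        positivity
      · rw [div_mul_eq_mul_div, le_div_iff₀ hα]
        nlinarith
    -- pass to the infimum
    have hne : ((fun ψ : H => ‖φ - ψ‖) '' (V : Set H)).Nonempty :=
      ⟨‖φ - 0‖, 0, V.zero_mem, rfl⟩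
    have hsmul : (‖A‖ / α) * sInf ((fun ψ : H => ‖φ - ψ‖) '' (V : Set H)) =
        sInf ((‖A‖ / α) • ((fun ψ : H => ‖φ - ψ‖) '' (V : Set H))) := by
      rw [Real.sInf_smul_of_nonneg (by positivity)]
      simp [smul_eq_mul]
    rw [hsmul]
    apply le_csInf (hne.smul_set)
    rintro b ⟨c, ⟨ψ, hψ, rfl⟩, rfl⟩
    simpa [smul_eq_mul] using key ψ hψ
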